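/- Assume (H1) and let l ∈ (0,h] satisfy M · l^{α+k+1-γ} · Γ(k+1)/Γ(α+k+1) ≤ b. Then for every n ≥ 0 the Picard iterate φₙ is continuous on (1,1+l] and satisfies |(log t)^{1-γ} φₙ(t) - x₀| ≤ b for all t ∈ (1,1+l]. -/

import Mathlib

open Real MeasureTheory intervalIntegral Set Filter
open Topology

set_option maxHeartbeats 1000000

lemma rpow_le_max {a A u k : ℝ} (ha : 0 < a) (h1 : a ≤ u) (h2 : u ≤ A) :
    u ^ k ≤ max (a ^ k) (A ^ k) := by
  rcases le_or_gt 0 k with hk | hk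
  · exact le_max_of_le_right (Real.rpow_le_rpow (le_trans ha.le h1) h2 hk)
  · exact le_max_of_le_left (Real.rpow_le_rpow_of_nonpos ha h1 hk.le)

lemma beta_intervalIntegrable {p q a : ℝ} (hp : 0 < p) (hq : 0 < q) (ha : 0 < a) :
    IntervalIntegrable (fun x : ℝ => x ^ (p - 1) * (a - x) ^ (q - 1)) volume 0 a := by
  have h1 : IntervalIntegrable (fun x : ℝ => x ^ (p - 1) * (a - x) ^ (q - 1)) volume 0 (a / 2) := by
    apply IntervalIntegrable.mul_continuousOn
    · exact intervalIntegral.intervalIntegrable_rpow' (by linarith)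
    · apply ContinuousOn.rpow_const (by fun_prop)
      intro x hx
      rw [Set.uIcc_of_le (by linarith)] at hx
      left; intro hcon; have := hx.2; nlinarith [hx.1, hx.2]
  have h2 : IntervalIntegrable (fun x : ℝ => x ^ (p - 1) * (a - x) ^ (q - 1)) volume (a / 2) a := by
    apply IntervalIntegrable.continuousOn_mul
    · have : IntervalIntegrable (fun x : ℝ => x ^ (q - 1)) volume (a - a / 2) (a - a) :=
        intervalIntegral.intervalIntegrable_rpow' (by linarith)
      simpa using this.comp_sub_left a
    · apply ContinuousOn.rpow_const (by fun_prop)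
      intro x hx
      rw [Set.uIcc_of_le (by linarith)] at hx
      left; intro hcon; nlinarith [hx.1, hx.2]
  exact h1.trans h2

lemma beta_integral_value {p q a : ℝ} (hp : 0 < p) (hq : 0 < q) (ha : 0 < a) :
    ∫ x in (0:ℝ)..a, x ^ (p - 1) * (a - x) ^ (q - 1)
      = a ^ (p + q - 1) * (Real.Gamma p * Real.Gamma q / Real.Gamma (p + q)) := by
  have hC : ∫ x in (0:ℝ)..a, (x:ℂ) ^ ((p:ℂ) - 1) * ((a:ℂ) - x) ^ ((q:ℂ) - 1)
      = (a:ℂ) ^ ((p:ℂ) + q - 1) * Complex.betaIntegral p q :=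
    Complex.betaIntegral_scaled p q ha
  have hpq : ((p:ℂ) + q) = ((p + q : ℝ) : ℂ) := by push_cast; ring
  have hGne : Complex.Gamma ((p:ℂ) + q) ≠ 0 := by
    rw [hpq, Complex.Gamma_ofReal]
    exact_mod_cast (Real.Gamma_pos_of_pos (by linarith)).ne'
  have hB : Complex.betaIntegral p q
      = ((Real.Gamma p * Real.Gamma q / Real.Gamma (p + q) : ℝ) : ℂ) := by
    have h := Complex.Gamma_mul_Gamma_eq_betaIntegral (s := (p:ℂ)) (t := (q:ℂ))
      (by simpa using hp) (by simpa using hq)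
    have hne : ((Real.Gamma (p + q) : ℝ) : ℂ) ≠ 0 := by
      exact_mod_cast (Real.Gamma_pos_of_pos (by linarith : (0:ℝ) < p + q)).ne'
    rw [Complex.ofReal_div, Complex.ofReal_mul, eq_div_iff hne, ← Complex.Gamma_ofReal,
      ← Complex.Gamma_ofReal, ← Complex.Gamma_ofReal, ← hpq, mul_comm]
    exact h.symm
  rw [hB] at hC
  have key : ∫ x in (0:ℝ)..a, (x:ℂ) ^ ((p:ℂ) - 1) * ((a:ℂ) - x) ^ ((q:ℂ) - 1)
      = ((∫ x in (0:ℝ)..a, x ^ (p - 1) * (a - x) ^ (q - 1) : ℝ) : ℂ) := by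
    rw [← intervalIntegral.integral_ofReal]
    refine intervalIntegral.integral_congr_ae ?_
    filter_upwards [] with x
    intro hx
    rw [Set.uIoc_of_le ha.le] at hx
    rw [Complex.ofReal_mul, Complex.ofReal_cpow hx.1.le, Complex.ofReal_cpow (by linarith [hx.2] : (0:ℝ) ≤ a - x)]
    push_cast; ring
  rw [key] at hC
  have ha' : (a:ℂ) ^ ((p:ℂ) + q - 1) = ((a ^ (p + q - 1) : ℝ) : ℂ) := by
    rw [Complex.ofReal_cpow ha.le]; push_cast; ring_nf
  rw [ha'] at hC
  exact_mod_cast hC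

lemma exp_image_Ioo {a b : ℝ} (ha : 0 < a) (hb : 0 < b) :
    Real.exp '' Set.Ioo (Real.log a) (Real.log b) = Set.Ioo a b := by
  ext y
  constructor
  · rintro ⟨u, ⟨h1, h2⟩, rfl⟩
    exact ⟨by calc a = Real.exp (Real.log a) := (Real.exp_log ha).symm
        _ < Real.exp u := Real.exp_lt_exp.mpr h1,
      by calc Real.exp u < Real.exp (Real.log b) := Real.exp_lt_exp.mpr h2
        _ = b := Real.exp_log hb⟩
  · rintro ⟨h1, h2⟩
    refine ⟨Real.log y, ⟨?_, ?_⟩, Real.exp_log (lt_trans ha h1)⟩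
    · exact Real.log_lt_log ha h1
    · exact Real.log_lt_log (lt_trans ha h1) h2

lemma integrableOn_log_div_iff (F : ℝ → ℝ) {a b : ℝ} (ha : 0 < a) (hb : 0 < b) :
    IntegrableOn (fun s => F (Real.log s) / s) (Set.Ioo a b)
      ↔ IntegrableOn F (Set.Ioo (Real.log a) (Real.log b)) := by
  have h := MeasureTheory.integrableOn_image_iff_integrableOn_abs_deriv_smul
    (f := Real.exp) (f' := Real.exp) (s := Set.Ioo (Real.log a) (Real.log b))
    measurableSet_Ioo
    (fun x _ => (Real.hasDerivAt_exp x).hasDerivWithinAt)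
    (Real.exp_injective.injOn)
    (fun s => F (Real.log s) / s)
  rw [exp_image_Ioo ha hb] at h
  rw [h]
  apply integrableOn_congr_fun _ measurableSet_Ioo
  intro u _
  have := Real.exp_pos u
  simp only [smul_eq_mul, abs_of_pos this, Real.log_exp]
  field_simp

lemma integral_log_div (F : ℝ → ℝ) {a b : ℝ} (ha : 0 < a) (hb : 0 < b) :
    ∫ s in Set.Ioo a b, F (Real.log s) / s
      = ∫ u in Set.Ioo (Real.log a) (Real.log b), F u := by
  have h := MeasureTheory.integral_image_eq_integral_abs_deriv_smul
    (f := Real.exp) (f' := Real.exp) (s := Set.Ioo (Real.log a) (Real.log b))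
    measurableSet_Ioo
    (fun x _ => (Real.hasDerivAt_exp x).hasDerivWithinAt)
    (Real.exp_injective.injOn)
    (fun s => F (Real.log s) / s)
  rw [exp_image_Ioo ha hb] at h
  rw [h]
  apply MeasureTheory.setIntegral_congr_fun measurableSet_Ioo
  intro u _
  have := Real.exp_pos u
  simp only [smul_eq_mul, abs_of_pos this, Real.log_exp]
  field_simp

lemma ker_integrableOn {α k : ℝ} (hα0 : 0 < α) (hk : -1 < k) {L : ℝ} (hL : 0 < L) :
    IntegrableOn (fun u : ℝ => (L - u) ^ (α - 1) * u ^ k) (Set.Ioo 0 L) := by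
  have h := beta_intervalIntegrable (p := k + 1) (q := α) (by linarith) hα0 hL
  have h2 : IntegrableOn (fun x : ℝ => x ^ (k + 1 - 1) * (L - x) ^ (α - 1)) (Set.Ioo 0 L) :=
    (integrableOn_Ioc_iff_integrableOn_Ioo).mp
      ((intervalIntegrable_iff_integrableOn_Ioc_of_le hL.le).mp h)
  refine h2.congr_fun ?_ measurableSet_Ioo
  intro x _
  have : k + 1 - 1 = k := by ring
  simp only [this]; exact mul_comm _ _

lemma ker_integral {α k : ℝ} (hα0 : 0 < α) (hk : -1 < k) {L : ℝ} (hL : 0 < L) :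
    ∫ u in Set.Ioo 0 L, (L - u) ^ (α - 1) * u ^ k
      = L ^ (α + k) * (Real.Gamma (k + 1) * Real.Gamma α / Real.Gamma (α + k + 1)) := by
  have h := beta_integral_value (p := k + 1) (q := α) (by linarith) hα0 hL
  rw [intervalIntegral.integral_of_le hL.le, MeasureTheory.integral_Ioc_eq_integral_Ioo] at h
  have e1 : k + 1 + α - 1 = α + k := by ring
  have e2 : k + 1 + α = α + k + 1 := by ring
  rw [e1, e2] at h
  rw [← h]
  apply MeasureTheory.setIntegral_congr_fun measurableSet_Ioo
  intro x _
  have : k + 1 - 1 = k := by ring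
  simp only [this]; exact mul_comm _ _

lemma ker_simple_integrableOn {α : ℝ} (hα0 : 0 < α) {L1 L2 : ℝ} :
    IntegrableOn (fun u : ℝ => (L2 - u) ^ (α - 1)) (Set.Ioo L1 L2) := by
  have h : IntervalIntegrable (fun x : ℝ => x ^ (α - 1)) volume (L2 - L1) (L2 - L2) :=
    intervalIntegral.intervalIntegrable_rpow' (by linarith)
  have h2 := h.comp_sub_left L2
  simp only [sub_sub_cancel] at h2
  rcases le_or_gt L1 L2 with hle | hlt
  · exact (integrableOn_Ioc_iff_integrableOn_Ioo).mp
      ((intervalIntegrable_iff_integrableOn_Ioc_of_le hle).mp h2)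
  · simp [Set.Ioo_eq_empty_of_le hlt.le, IntegrableOn]

lemma ker_simple_integral {α : ℝ} (hα0 : 0 < α) {L1 L2 : ℝ} (h12 : L1 ≤ L2) :
    ∫ u in Set.Ioo L1 L2, (L2 - u) ^ (α - 1) = (L2 - L1) ^ α / α := by
  have h := intervalIntegral.integral_comp_sub_left (a := L1) (b := L2)
    (fun x : ℝ => x ^ (α - 1)) L2
  simp only [sub_sub_cancel, sub_self] at h
  rw [← MeasureTheory.integral_Ioc_eq_integral_Ioo,
    ← intervalIntegral.integral_of_le h12, h]
  rw [integral_rpow (Or.inl (by linarith : (-1:ℝ) < α - 1))]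
  rw [Real.zero_rpow (by intro hc; simp at hc; linarith : α - 1 + 1 ≠ 0)]
  have : α - 1 + 1 = α := by ring
  rw [this]
  ring

lemma caratheodory_aemeasurable (f : ℝ → ℝ → ℝ) (γ x₀ b h l : ℝ)
    (hl0 : 0 < l) (hlh : l ≤ h)
    (H1cont : ∀ t ∈ Set.Ioc (1:ℝ) (1 + h),
      ContinuousOn (fun x : ℝ => f t (Real.log t ^ (γ - 1) * x)) (Set.Icc (x₀ - b) (x₀ + b)))
    (H1meas : ∀ x ∈ Set.Icc (x₀ - b) (x₀ + b),
      AEMeasurable (fun t : ℝ => f t (Real.log t ^ (γ - 1) * x))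
        (MeasureTheory.volume.restrict (Set.Ioc (1:ℝ) (1 + h))))
    (x : ℝ → ℝ) (hxc : ContinuousOn x (Set.Ioc 1 (1 + l)))
    (hmap : ∀ s ∈ Set.Ioc (1:ℝ) (1 + l), x s ∈ Set.Icc (x₀ - b) (x₀ + b)) :
    AEMeasurable (fun s => f s (Real.log s ^ (γ - 1) * x s))
      (MeasureTheory.volume.restrict (Set.Ioc (1:ℝ) (1 + l))) := by
  set J : Set ℝ := Set.Ioc 1 (1 + l) with hJ
  have hJh : J ⊆ Set.Ioc 1 (1 + h) := Set.Ioc_subset_Ioc le_rfl (by linarith)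
  have hres : MeasureTheory.volume.restrict J
      ≤ MeasureTheory.volume.restrict (Set.Ioc (1:ℝ) (1 + h)) :=
    MeasureTheory.Measure.restrict_mono hJh le_rfl
  set node : ℕ → ℝ → ℝ :=
    fun m s => 1 + l * ((⌈(s - 1) * ((m:ℝ) + 1) / l⌉ : ℤ) : ℝ) / ((m:ℝ) + 1) with hnode
  have hNpos : ∀ m : ℕ, (0:ℝ) < (m:ℝ) + 1 := fun m => by positivity
  have ceil_facts : ∀ (m : ℕ), ∀ s ∈ J,
      (1:ℤ) ≤ ⌈(s - 1) * ((m:ℝ) + 1) / l⌉ ∧ ⌈(s - 1) * ((m:ℝ) + 1) / l⌉ ≤ (m:ℤ) + 1 := by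
    intro m s hs
    obtain ⟨hs1, hs2⟩ := hs
    have hN : (0:ℝ) < (m:ℝ) + 1 := hNpos m
    constructor
    · apply Int.ceil_pos.mpr
      exact div_pos (mul_pos (by linarith) hN) hl0
    · apply Int.ceil_le.mpr
      push_cast
      rw [div_le_iff₀ hl0]
      nlinarith
  have node_ge : ∀ (m : ℕ), ∀ s ∈ J, s ≤ node m s := by
    intro m s hs
    have hN : (0:ℝ) < (m:ℝ) + 1 := hNpos m
    have hcy : (s - 1) * ((m:ℝ) + 1) / l ≤ ((⌈(s - 1) * ((m:ℝ) + 1) / l⌉ : ℤ) : ℝ) :=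
      Int.le_ceil _
    simp only [hnode]
    rw [← sub_nonneg]
    have : 1 + l * ((⌈(s - 1) * ((m:ℝ) + 1) / l⌉ : ℤ) : ℝ) / ((m:ℝ) + 1) - s
        = (l / ((m:ℝ) + 1)) * (((⌈(s - 1) * ((m:ℝ) + 1) / l⌉ : ℤ) : ℝ)
            - (s - 1) * ((m:ℝ) + 1) / l) := by
      field_simp
      ring
    rw [this]
    have h1 : (0:ℝ) ≤ l / ((m:ℝ) + 1) := by positivity
    have h2 : (0:ℝ) ≤ ((⌈(s - 1) * ((m:ℝ) + 1) / l⌉ : ℤ) : ℝ)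
        - (s - 1) * ((m:ℝ) + 1) / l := by linarith
    exact mul_nonneg h1 h2
  have node_le : ∀ (m : ℕ), ∀ s ∈ J, node m s ≤ s + l / ((m:ℝ) + 1) := by
    intro m s hs
    have hN : (0:ℝ) < (m:ℝ) + 1 := hNpos m
    have hcy : ((⌈(s - 1) * ((m:ℝ) + 1) / l⌉ : ℤ) : ℝ) < (s - 1) * ((m:ℝ) + 1) / l + 1 :=
      Int.ceil_lt_add_one _
    simp only [hnode]
    rw [← sub_nonneg]
    have : s + l / ((m:ℝ) + 1)
        - (1 + l * ((⌈(s - 1) * ((m:ℝ) + 1) / l⌉ : ℤ) : ℝ) / ((m:ℝ) + 1))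
        = (l / ((m:ℝ) + 1)) * ((s - 1) * ((m:ℝ) + 1) / l + 1
            - ((⌈(s - 1) * ((m:ℝ) + 1) / l⌉ : ℤ) : ℝ)) := by
      field_simp
      ring
    rw [this]
    have h1 : (0:ℝ) ≤ l / ((m:ℝ) + 1) := by positivity
    have h2 : (0:ℝ) ≤ (s - 1) * ((m:ℝ) + 1) / l + 1
        - ((⌈(s - 1) * ((m:ℝ) + 1) / l⌉ : ℤ) : ℝ) := by linarith
    positivity
  have node_memJ : ∀ (m : ℕ), ∀ s ∈ J, node m s ∈ J := by
    intro m s hs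
    obtain ⟨hc1, hc2⟩ := ceil_facts m s hs
    have hc1' : (1:ℝ) ≤ ((⌈(s - 1) * ((m:ℝ) + 1) / l⌉ : ℤ) : ℝ) := by exact_mod_cast hc1
    have hc2' : ((⌈(s - 1) * ((m:ℝ) + 1) / l⌉ : ℤ) : ℝ) ≤ (m:ℝ) + 1 := by exact_mod_cast hc2
    have hN : (0:ℝ) < (m:ℝ) + 1 := hNpos m
    constructor
    · simp only [hnode]
      have : 0 < l * ((⌈(s - 1) * ((m:ℝ) + 1) / l⌉ : ℤ) : ℝ) / ((m:ℝ) + 1) := by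
        apply div_pos (mul_pos hl0 (by linarith)) hN
      linarith
    · simp only [hnode]
      have : l * ((⌈(s - 1) * ((m:ℝ) + 1) / l⌉ : ℤ) : ℝ) / ((m:ℝ) + 1) ≤ l := by
        rw [div_le_iff₀ hN]
        nlinarith
      linarith
  -- measurability of each approximation
  have hgm : ∀ m : ℕ, AEMeasurable (fun s => f s (Real.log s ^ (γ - 1) * x (node m s)))
      (MeasureTheory.volume.restrict J) := by
    intro m
    set G : ℝ → ℝ := fun s => ∑ i ∈ Finset.Icc (1:ℤ) ((m:ℤ) + 1),
      Set.indicator {s' : ℝ | ⌈(s' - 1) * ((m:ℝ) + 1) / l⌉ = i}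
        (fun s' => f s' (Real.log s' ^ (γ - 1) * x (1 + l * (i:ℝ) / ((m:ℝ) + 1)))) s with hG
    have hGmeas : AEMeasurable G (MeasureTheory.volume.restrict J) := by
      apply Finset.aemeasurable_fun_sum
      intro i hi
      rw [Finset.mem_Icc] at hi
      have hi1 : (1:ℝ) ≤ (i:ℝ) := by exact_mod_cast hi.1
      have hi2 : (i:ℝ) ≤ (m:ℝ) + 1 := by exact_mod_cast hi.2
      have hN : (0:ℝ) < (m:ℝ) + 1 := hNpos m
      have hvJ : 1 + l * (i:ℝ) / ((m:ℝ) + 1) ∈ J := by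
        constructor
        · have : 0 < l * (i:ℝ) / ((m:ℝ) + 1) := div_pos (mul_pos hl0 (by linarith)) hN
          linarith
        · have : l * (i:ℝ) / ((m:ℝ) + 1) ≤ l := by
            rw [div_le_iff₀ hN]; nlinarith
          linarith
      apply AEMeasurable.indicator
      · exact (H1meas _ (hmap _ hvJ)).mono_measure hres
      · have hmeas : Measurable fun s' : ℝ => ⌈(s' - 1) * ((m:ℝ) + 1) / l⌉ := by
          apply Measurable.ceil
          fun_prop
        exact hmeas (measurableSet_singleton i)
    apply hGmeas.congr
    rw [Filter.EventuallyEq, MeasureTheory.ae_restrict_iff' measurableSet_Ioc]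
    apply Filter.Eventually.of_forall
    intro s hs
    obtain ⟨hc1, hc2⟩ := ceil_facts m s hs
    have hGs : G s = ∑ i ∈ Finset.Icc (1:ℤ) ((m:ℤ) + 1),
        Set.indicator {s' : ℝ | ⌈(s' - 1) * ((m:ℝ) + 1) / l⌉ = i}
          (fun s' => f s' (Real.log s' ^ (γ - 1) * x (1 + l * (i:ℝ) / ((m:ℝ) + 1)))) s := rfl
    simp only [hnode]
    rw [hGs, Finset.sum_eq_single_of_mem (⌈(s - 1) * ((m:ℝ) + 1) / l⌉)
      (Finset.mem_Icc.mpr ⟨hc1, hc2⟩)]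
    · rw [Set.indicator_of_mem (by exact rfl)]
    · intro i _ hne
      apply Set.indicator_of_notMem
      intro hmem
      exact hne (by exact hmem.symm)
  -- pointwise convergence and conclusion
  apply aemeasurable_of_tendsto_metrizable_ae atTop hgm
  rw [MeasureTheory.ae_restrict_iff' measurableSet_Ioc]
  apply Filter.Eventually.of_forall
  intro s hs
  have hNt : Filter.Tendsto (fun m : ℕ => l / ((m:ℝ) + 1)) atTop (𝓝 0) := by
    apply Filter.Tendsto.div_atTop (tendsto_const_nhds)
    exact Filter.tendsto_atTop_add_const_right _ _ tendsto_natCast_atTop_atTop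
  have hnode_tendsto : Filter.Tendsto (fun m => node m s) atTop (𝓝 s) := by
    apply tendsto_of_tendsto_of_tendsto_of_le_of_le tendsto_const_nhds
      ?_ (fun m => node_ge m s hs) (fun m => node_le m s hs)
    have := Filter.Tendsto.add (tendsto_const_nhds : Filter.Tendsto (fun _ : ℕ => s) atTop (𝓝 s))
      hNt
    simpa using this
  have hxt : Filter.Tendsto (fun m => x (node m s)) atTop (𝓝 (x s)) := by
    apply ((hxc s hs).tendsto).comp
    rw [tendsto_nhdsWithin_iff]
    exact ⟨hnode_tendsto, Filter.Eventually.of_forall (fun m => node_memJ m s hs)⟩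
  have hFc := (H1cont s (hJh hs)) (x s) (hmap s hs)
  have htend : Filter.Tendsto (fun m => f s (Real.log s ^ (γ - 1) * x (node m s))) atTop
      (𝓝 (f s (Real.log s ^ (γ - 1) * x s))) := by
    apply hFc.tendsto.comp
    rw [tendsto_nhdsWithin_iff]
    exact ⟨hxt, Filter.Eventually.of_forall (fun m => hmap _ (node_memJ m s hs))⟩
  exact htend

lemma abs_integrand_le {α k M : ℝ} (hM : 0 ≤ M) {g : ℝ → ℝ} {L s : ℝ}
    (hs0 : 0 < s) (hA : Real.log s ≤ L) (hgb : |g s| ≤ M * Real.log s ^ k) :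
    |(L - Real.log s) ^ (α - 1) * g s / s|
      ≤ (L - Real.log s) ^ (α - 1) * (M * Real.log s ^ k) / s := by
  have hA0 : 0 ≤ (L - Real.log s) ^ (α - 1) := Real.rpow_nonneg (by linarith) _
  rw [abs_div, abs_mul, abs_of_nonneg hA0, abs_of_pos hs0]
  gcongr

lemma integrand_integrableOn {α k M l : ℝ} (hα0 : 0 < α) (hk : -1 < k)
    (hM : 0 ≤ M) (hl0 : 0 < l) (g : ℝ → ℝ)
    (hgmeas : AEMeasurable g (MeasureTheory.volume.restrict (Set.Ioc 1 (1 + l))))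
    (hgbdd : ∀ s ∈ Set.Ioc (1:ℝ) (1 + l), |g s| ≤ M * Real.log s ^ k)
    {t : ℝ} (ht : t ∈ Set.Ioc (1:ℝ) (1 + l)) :
    IntegrableOn (fun s => (Real.log t - Real.log s) ^ (α - 1) * g s / s) (Set.Ioc 1 t) := by
  obtain ⟨ht1, ht2⟩ := ht
  have ht0 : (0:ℝ) < t := by linarith
  have hL : 0 < Real.log t := Real.log_pos ht1
  have hDint : IntegrableOn
      (fun s => (Real.log t - Real.log s) ^ (α - 1) * (M * Real.log s ^ k) / s)
      (Set.Ioc 1 t) := by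
    rw [integrableOn_Ioc_iff_integrableOn_Ioo]
    have h2 : IntegrableOn (fun u : ℝ => (Real.log t - u) ^ (α - 1) * (M * u ^ k))
        (Set.Ioo (Real.log 1) (Real.log t)) := by
      rw [Real.log_one]
      refine MeasureTheory.IntegrableOn.congr_fun
        (f := fun u : ℝ => M * ((Real.log t - u) ^ (α - 1) * u ^ k))
        ((ker_integrableOn hα0 hk hL).const_mul M) ?_ measurableSet_Ioo
      intro u _
      simp only []
      ring
    exact (integrableOn_log_div_iff
      (fun u => (Real.log t - u) ^ (α - 1) * (M * u ^ k)) one_pos ht0).mpr h2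
  have hmeas : AEStronglyMeasurable (fun s => (Real.log t - Real.log s) ^ (α - 1) * g s / s)
      (MeasureTheory.volume.restrict (Set.Ioc 1 t)) := by
    have hker : Measurable fun s : ℝ => (Real.log t - Real.log s) ^ (α - 1) := by
      measurability
    have hg' : AEMeasurable g (MeasureTheory.volume.restrict (Set.Ioc 1 t)) :=
      hgmeas.mono_measure
        (MeasureTheory.Measure.restrict_mono (Set.Ioc_subset_Ioc le_rfl ht2) le_rfl)
    have hh : AEMeasurable (fun s => (Real.log t - Real.log s) ^ (α - 1) * g s * s⁻¹)
        (MeasureTheory.volume.restrict (Set.Ioc 1 t)) :=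
      (hker.aemeasurable.mul hg').mul measurable_inv.aemeasurable
    simpa [div_eq_mul_inv] using hh.aestronglyMeasurable
  apply MeasureTheory.Integrable.mono' hDint hmeas
  rw [MeasureTheory.ae_restrict_iff' measurableSet_Ioc]
  apply Filter.Eventually.of_forall
  intro s hs
  obtain ⟨hs1, hs2⟩ := hs
  have hs0 : (0:ℝ) < s := by linarith
  rw [Real.norm_eq_abs]
  exact abs_integrand_le hM hs0 (Real.log_le_log hs0 hs2) (hgbdd s ⟨hs1, by linarith⟩)

lemma integrand_integral_bound {α k M l : ℝ} (hα0 : 0 < α) (hk : -1 < k)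
    (hM : 0 ≤ M) (hl0 : 0 < l) (g : ℝ → ℝ)
    (hgmeas : AEMeasurable g (MeasureTheory.volume.restrict (Set.Ioc 1 (1 + l))))
    (hgbdd : ∀ s ∈ Set.Ioc (1:ℝ) (1 + l), |g s| ≤ M * Real.log s ^ k)
    {t : ℝ} (ht : t ∈ Set.Ioc (1:ℝ) (1 + l)) :
    |∫ s in Set.Ioc 1 t, (Real.log t - Real.log s) ^ (α - 1) * g s / s|
      ≤ M * Real.log t ^ (α + k)
          * (Real.Gamma (k + 1) * Real.Gamma α / Real.Gamma (α + k + 1)) := by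
  obtain ⟨ht1, ht2⟩ := ht
  have ht0 : (0:ℝ) < t := by linarith
  have hL : 0 < Real.log t := Real.log_pos ht1
  have hint := integrand_integrableOn hα0 hk hM hl0 g hgmeas hgbdd ⟨ht1, ht2⟩
  have hDint : IntegrableOn
      (fun s => (Real.log t - Real.log s) ^ (α - 1) * (M * Real.log s ^ k) / s)
      (Set.Ioc 1 t) := by
    rw [integrableOn_Ioc_iff_integrableOn_Ioo]
    have h2 : IntegrableOn (fun u : ℝ => (Real.log t - u) ^ (α - 1) * (M * u ^ k))
        (Set.Ioo (Real.log 1) (Real.log t)) := by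
      rw [Real.log_one]
      refine MeasureTheory.IntegrableOn.congr_fun
        (f := fun u : ℝ => M * ((Real.log t - u) ^ (α - 1) * u ^ k))
        ((ker_integrableOn hα0 hk hL).const_mul M) ?_ measurableSet_Ioo
      intro u _
      simp only []
      ring
    exact (integrableOn_log_div_iff
      (fun u => (Real.log t - u) ^ (α - 1) * (M * u ^ k)) one_pos ht0).mpr h2
  calc |∫ s in Set.Ioc 1 t, (Real.log t - Real.log s) ^ (α - 1) * g s / s|
      ≤ ∫ s in Set.Ioc 1 t, ‖(Real.log t - Real.log s) ^ (α - 1) * g s / s‖ := by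
        rw [← Real.norm_eq_abs]
        exact MeasureTheory.norm_integral_le_integral_norm _
    _ ≤ ∫ s in Set.Ioc 1 t,
          (Real.log t - Real.log s) ^ (α - 1) * (M * Real.log s ^ k) / s := by
        apply MeasureTheory.setIntegral_mono_on hint.norm hDint measurableSet_Ioc
        intro s hs
        obtain ⟨hs1, hs2⟩ := hs
        have hs0 : (0:ℝ) < s := by linarith
        rw [Real.norm_eq_abs]
        exact abs_integrand_le hM hs0 (Real.log_le_log hs0 hs2) (hgbdd s ⟨hs1, by linarith⟩)
    _ = ∫ s in Set.Ioo 1 t,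
          (Real.log t - Real.log s) ^ (α - 1) * (M * Real.log s ^ k) / s :=
        MeasureTheory.integral_Ioc_eq_integral_Ioo
    _ = ∫ u in Set.Ioo (Real.log 1) (Real.log t), (Real.log t - u) ^ (α - 1) * (M * u ^ k) :=
        integral_log_div (fun u => (Real.log t - u) ^ (α - 1) * (M * u ^ k)) one_pos ht0
    _ = M * ∫ u in Set.Ioo 0 (Real.log t), (Real.log t - u) ^ (α - 1) * u ^ k := by
        rw [Real.log_one, ← smul_eq_mul, ← MeasureTheory.integral_smul]
        apply MeasureTheory.setIntegral_congr_fun measurableSet_Ioo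
        intro u _
        simp only [smul_eq_mul]
        ring
    _ = M * (Real.log t ^ (α + k)
          * (Real.Gamma (k + 1) * Real.Gamma α / Real.Gamma (α + k + 1))) := by
        rw [ker_integral hα0 hk hL]
    _ = M * Real.log t ^ (α + k)
          * (Real.Gamma (k + 1) * Real.Gamma α / Real.Gamma (α + k + 1)) := by ring

lemma Phi_diff_bound {α k M l : ℝ} (hα0 : 0 < α) (hα1 : α < 1) (hk : -1 < k)
    (hM : 0 ≤ M) (hl0 : 0 < l) (g : ℝ → ℝ)
    (hgmeas : AEMeasurable g (MeasureTheory.volume.restrict (Set.Ioc 1 (1 + l))))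
    (hgbdd : ∀ s ∈ Set.Ioc (1:ℝ) (1 + l), |g s| ≤ M * Real.log s ^ k)
    {a t₁ t₂ : ℝ} (ha : 1 < a) (h1 : a ≤ t₁) (h12 : t₁ ≤ t₂)
    (ht₂ : t₂ ∈ Set.Ioc (1:ℝ) (1 + l)) :
    |(∫ s in Set.Ioc 1 t₂, (Real.log t₂ - Real.log s) ^ (α - 1) * g s / s)
        - ∫ s in Set.Ioc 1 t₁, (Real.log t₁ - Real.log s) ^ (α - 1) * g s / s|
      ≤ M * (Real.Gamma (k + 1) * Real.Gamma α / Real.Gamma (α + k + 1))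
            * (Real.log t₁ ^ (α + k) - Real.log t₂ ^ (α + k))
        + 2 * (M * max (Real.log a ^ k) (Real.log (1 + l) ^ k))
            * ((Real.log t₂ - Real.log t₁) ^ α / α) := by
  set Bk : ℝ := Real.Gamma (k + 1) * Real.Gamma α / Real.Gamma (α + k + 1) with hBk
  set C : ℝ := max (Real.log a ^ k) (Real.log (1 + l) ^ k) with hC
  have ht₁ : t₁ ∈ Set.Ioc (1:ℝ) (1 + l) := ⟨lt_of_lt_of_le ha h1, le_trans h12 ht₂.2⟩
  have ht₁1 : (1:ℝ) < t₁ := ht₁.1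
  have ht₁0 : (0:ℝ) < t₁ := by linarith
  have ht₂0 : (0:ℝ) < t₂ := by linarith [ht₂.1]
  set L₁ : ℝ := Real.log t₁ with hL₁d
  set L₂ : ℝ := Real.log t₂ with hL₂d
  have hL₁ : 0 < L₁ := Real.log_pos ht₁1
  have hL₂ : 0 < L₂ := Real.log_pos ht₂.1
  have hL12 : L₁ ≤ L₂ := Real.log_le_log ht₁0 h12
  have hLa : 0 < Real.log a := Real.log_pos ha
  have hLa1 : Real.log a ≤ L₁ := Real.log_le_log (by linarith) h1
  have hL2l : L₂ ≤ Real.log (1 + l) := Real.log_le_log ht₂0 ht₂.2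
  have hC0 : 0 ≤ C := le_max_of_le_left (le_of_lt (Real.rpow_pos_of_pos hLa k))
  -- integrabilities
  have I11 := integrand_integrableOn hα0 hk hM hl0 g hgmeas hgbdd ht₁
  have I22 := integrand_integrableOn hα0 hk hM hl0 g hgmeas hgbdd ht₂
  have I21 : IntegrableOn (fun s => (L₂ - Real.log s) ^ (α - 1) * g s / s) (Set.Ioc 1 t₁) :=
    I22.mono_set (Set.Ioc_subset_Ioc le_rfl h12)
  have I2mid : IntegrableOn (fun s => (L₂ - Real.log s) ^ (α - 1) * g s / s)
      (Set.Ioc t₁ t₂) :=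
    I22.mono_set (Set.Ioc_subset_Ioc (by linarith) le_rfl)
  -- splitting
  have hsplit : (∫ s in Set.Ioc 1 t₂, (L₂ - Real.log s) ^ (α - 1) * g s / s)
      = (∫ s in Set.Ioc 1 t₁, (L₂ - Real.log s) ^ (α - 1) * g s / s)
        + ∫ s in Set.Ioc t₁ t₂, (L₂ - Real.log s) ^ (α - 1) * g s / s := by
    rw [← MeasureTheory.setIntegral_union (Set.Ioc_disjoint_Ioc_of_le le_rfl) measurableSet_Ioc I21 I2mid]
    rw [Set.Ioc_union_Ioc_eq_Ioc (by linarith : (1:ℝ) ≤ t₁) h12]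
  have hdiff : (∫ s in Set.Ioc 1 t₂, (L₂ - Real.log s) ^ (α - 1) * g s / s)
        - (∫ s in Set.Ioc 1 t₁, (L₁ - Real.log s) ^ (α - 1) * g s / s)
      = (∫ s in Set.Ioc 1 t₁,
          ((L₂ - Real.log s) ^ (α - 1) - (L₁ - Real.log s) ^ (α - 1)) * g s / s)
        + ∫ s in Set.Ioc t₁ t₂, (L₂ - Real.log s) ^ (α - 1) * g s / s := by
    rw [hsplit]
    have : (∫ s in Set.Ioc 1 t₁,
          ((L₂ - Real.log s) ^ (α - 1) - (L₁ - Real.log s) ^ (α - 1)) * g s / s)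
        = (∫ s in Set.Ioc 1 t₁, (L₂ - Real.log s) ^ (α - 1) * g s / s)
          - ∫ s in Set.Ioc 1 t₁, (L₁ - Real.log s) ^ (α - 1) * g s / s := by
      rw [← MeasureTheory.integral_sub I21 I11]
      apply MeasureTheory.setIntegral_congr_fun measurableSet_Ioc
      intro s _
      simp only []
      ring
    rw [this]
    ring
  -- middle kernel integral value
  have hmidker : ∫ u in Set.Ioo L₁ L₂, (L₂ - u) ^ (α - 1) = (L₂ - L₁) ^ α / α :=
    ker_simple_integral hα0 hL12
  have hr0 : 0 ≤ (L₂ - L₁) ^ α / α :=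
    div_nonneg (Real.rpow_nonneg (by linarith) _) hα0.le
  -- T2 bound
  have hT2 : |∫ s in Set.Ioc t₁ t₂, (L₂ - Real.log s) ^ (α - 1) * g s / s|
      ≤ M * C * ((L₂ - L₁) ^ α / α) := by
    have hRint : IntegrableOn (fun s => (M * C) * ((L₂ - Real.log s) ^ (α - 1) / s))
        (Set.Ioo t₁ t₂) :=
      ((integrableOn_log_div_iff (fun u => (L₂ - u) ^ (α - 1)) ht₁0 ht₂0).mpr
        (ker_simple_integrableOn hα0)).const_mul (M * C)
    calc |∫ s in Set.Ioc t₁ t₂, (L₂ - Real.log s) ^ (α - 1) * g s / s|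
        ≤ ∫ s in Set.Ioc t₁ t₂, ‖(L₂ - Real.log s) ^ (α - 1) * g s / s‖ := by
          rw [← Real.norm_eq_abs]
          exact MeasureTheory.norm_integral_le_integral_norm _
      _ = ∫ s in Set.Ioo t₁ t₂, ‖(L₂ - Real.log s) ^ (α - 1) * g s / s‖ :=
          MeasureTheory.integral_Ioc_eq_integral_Ioo
      _ ≤ ∫ s in Set.Ioo t₁ t₂, (M * C) * ((L₂ - Real.log s) ^ (α - 1) / s) := by
          apply MeasureTheory.setIntegral_mono_on
            ((I2mid.mono_set Set.Ioo_subset_Ioc_self).norm) hRint measurableSet_Ioo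
          intro s hs
          obtain ⟨hs1, hs2⟩ := hs
          have hs0 : (0:ℝ) < s := by linarith
          have hlogs : Real.log s ≤ L₂ := Real.log_le_log hs0 hs2.le
          have hXC : Real.log s ^ k ≤ C :=
            rpow_le_max hLa (le_trans hLa1 (Real.log_le_log ht₁0 hs1.le))
              (Real.log_le_log hs0 (le_trans hs2.le ht₂.2))
          have hA0 : 0 ≤ (L₂ - Real.log s) ^ (α - 1) := Real.rpow_nonneg (by linarith) _
          calc ‖(L₂ - Real.log s) ^ (α - 1) * g s / s‖
              ≤ (L₂ - Real.log s) ^ (α - 1) * (M * Real.log s ^ k) / s := by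
                rw [Real.norm_eq_abs]
                exact abs_integrand_le hM hs0 hlogs
                  (hgbdd s ⟨by linarith, by linarith [ht₂.2]⟩)
            _ ≤ (L₂ - Real.log s) ^ (α - 1) * (M * C) / s := by gcongr
            _ = (M * C) * ((L₂ - Real.log s) ^ (α - 1) / s) := by ring
      _ = (M * C) * ∫ s in Set.Ioo t₁ t₂, (L₂ - Real.log s) ^ (α - 1) / s :=
          MeasureTheory.integral_const_mul _ _
      _ = (M * C) * ∫ u in Set.Ioo L₁ L₂, (L₂ - u) ^ (α - 1) := by
          rw [integral_log_div (fun u => (L₂ - u) ^ (α - 1)) ht₁0 ht₂0]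
      _ = M * C * ((L₂ - L₁) ^ α / α) := by rw [hmidker]
  -- lower bound for the partial kernel integral
  have K2 := ker_integrableOn hα0 hk hL₂
  have K2a : IntegrableOn (fun u : ℝ => (L₂ - u) ^ (α - 1) * u ^ k) (Set.Ioc 0 L₁) :=
    (integrableOn_Ioc_iff_integrableOn_Ioo).mpr
      (K2.mono_set (Set.Ioo_subset_Ioo le_rfl hL12))
  have K2b : IntegrableOn (fun u : ℝ => (L₂ - u) ^ (α - 1) * u ^ k) (Set.Ioc L₁ L₂) :=
    (integrableOn_Ioc_iff_integrableOn_Ioo).mpr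
      (K2.mono_set (Set.Ioo_subset_Ioo hL₁.le le_rfl))
  have htail : ∫ u in Set.Ioc L₁ L₂, (L₂ - u) ^ (α - 1) * u ^ k
      ≤ C * ((L₂ - L₁) ^ α / α) := by
    calc ∫ u in Set.Ioc L₁ L₂, (L₂ - u) ^ (α - 1) * u ^ k
        = ∫ u in Set.Ioo L₁ L₂, (L₂ - u) ^ (α - 1) * u ^ k :=
          MeasureTheory.integral_Ioc_eq_integral_Ioo
      _ ≤ ∫ u in Set.Ioo L₁ L₂, C * (L₂ - u) ^ (α - 1) := by
          apply MeasureTheory.setIntegral_mono_on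
            (K2.mono_set (Set.Ioo_subset_Ioo hL₁.le le_rfl))
            ((ker_simple_integrableOn hα0).const_mul C) measurableSet_Ioo
          intro u hu
          obtain ⟨hu1, hu2⟩ := hu
          have hA0 : 0 ≤ (L₂ - u) ^ (α - 1) := Real.rpow_nonneg (by linarith) _
          have hXC : u ^ k ≤ C := rpow_le_max hLa (by linarith) (by linarith)
          calc (L₂ - u) ^ (α - 1) * u ^ k ≤ (L₂ - u) ^ (α - 1) * C := by gcongr
            _ = C * (L₂ - u) ^ (α - 1) := mul_comm _ _
      _ = C * ∫ u in Set.Ioo L₁ L₂, (L₂ - u) ^ (α - 1) := MeasureTheory.integral_const_mul _ _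
      _ = C * ((L₂ - L₁) ^ α / α) := by rw [hmidker]
  have hI0 : Bk * L₂ ^ (α + k) - C * ((L₂ - L₁) ^ α / α)
      ≤ ∫ u in Set.Ioo 0 L₁, (L₂ - u) ^ (α - 1) * u ^ k := by
    have hsplit2 : (∫ u in Set.Ioc 0 L₂, (L₂ - u) ^ (α - 1) * u ^ k)
        = (∫ u in Set.Ioc 0 L₁, (L₂ - u) ^ (α - 1) * u ^ k)
          + ∫ u in Set.Ioc L₁ L₂, (L₂ - u) ^ (α - 1) * u ^ k := by
      rw [← MeasureTheory.setIntegral_union (Set.Ioc_disjoint_Ioc_of_le le_rfl) measurableSet_Ioc K2a K2b]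
      rw [Set.Ioc_union_Ioc_eq_Ioc hL₁.le hL12]
    have hval : (∫ u in Set.Ioc 0 L₂, (L₂ - u) ^ (α - 1) * u ^ k) = L₂ ^ (α + k) * Bk := by
      rw [MeasureTheory.integral_Ioc_eq_integral_Ioo, ker_integral hα0 hk hL₂]
    have : (∫ u in Set.Ioc 0 L₁, (L₂ - u) ^ (α - 1) * u ^ k)
        = ∫ u in Set.Ioo 0 L₁, (L₂ - u) ^ (α - 1) * u ^ k :=
      MeasureTheory.integral_Ioc_eq_integral_Ioo
    linarith [hsplit2, hval, htail]
  -- T1 bound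
  have hT1 : |∫ s in Set.Ioc 1 t₁,
        ((L₂ - Real.log s) ^ (α - 1) - (L₁ - Real.log s) ^ (α - 1)) * g s / s|
      ≤ M * Bk * (L₁ ^ (α + k) - L₂ ^ (α + k)) + M * C * ((L₂ - L₁) ^ α / α) := by
    have Idiff : IntegrableOn
        (fun s => ((L₂ - Real.log s) ^ (α - 1) - (L₁ - Real.log s) ^ (α - 1)) * g s / s)
        (Set.Ioc 1 t₁) := by
      refine MeasureTheory.IntegrableOn.congr_fun (I21.sub I11) ?_ measurableSet_Ioc
      intro s _
      simp only [Pi.sub_apply, ← hL₁d]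
      ring
    have hFint : IntegrableOn
        (fun u : ℝ => ((L₁ - u) ^ (α - 1) - (L₂ - u) ^ (α - 1)) * (M * u ^ k))
        (Set.Ioo 0 L₁) := by
      refine MeasureTheory.IntegrableOn.congr_fun
        (f := fun u : ℝ => M * ((L₁ - u) ^ (α - 1) * u ^ k - (L₂ - u) ^ (α - 1) * u ^ k))
        ((((ker_integrableOn hα0 hk hL₁)).sub
          ((ker_integrableOn hα0 hk hL₂).mono_set
            (Set.Ioo_subset_Ioo le_rfl hL12))).const_mul M) ?_ measurableSet_Ioo
      intro u _
      simp only []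
      ring
    have hDdiffint : IntegrableOn
        (fun s => ((L₁ - Real.log s) ^ (α - 1) - (L₂ - Real.log s) ^ (α - 1))
          * (M * Real.log s ^ k) / s) (Set.Ioo 1 t₁) := by
      have := (integrableOn_log_div_iff
        (fun u => ((L₁ - u) ^ (α - 1) - (L₂ - u) ^ (α - 1)) * (M * u ^ k))
        one_pos ht₁0).mpr (by rw [Real.log_one]; exact hFint)
      exact this
    calc |∫ s in Set.Ioc 1 t₁,
          ((L₂ - Real.log s) ^ (α - 1) - (L₁ - Real.log s) ^ (α - 1)) * g s / s|
        ≤ ∫ s in Set.Ioc 1 t₁,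
            ‖((L₂ - Real.log s) ^ (α - 1) - (L₁ - Real.log s) ^ (α - 1)) * g s / s‖ := by
          rw [← Real.norm_eq_abs]
          exact MeasureTheory.norm_integral_le_integral_norm _
      _ = ∫ s in Set.Ioo 1 t₁,
            ‖((L₂ - Real.log s) ^ (α - 1) - (L₁ - Real.log s) ^ (α - 1)) * g s / s‖ :=
          MeasureTheory.integral_Ioc_eq_integral_Ioo
      _ ≤ ∫ s in Set.Ioo 1 t₁,
            ((L₁ - Real.log s) ^ (α - 1) - (L₂ - Real.log s) ^ (α - 1))
              * (M * Real.log s ^ k) / s := by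
          apply MeasureTheory.setIntegral_mono_on
            ((Idiff.mono_set Set.Ioo_subset_Ioc_self).norm) hDdiffint measurableSet_Ioo
          intro s hs
          obtain ⟨hs1, hs2⟩ := hs
          have hs0 : (0:ℝ) < s := by linarith
          have hlogs1 : Real.log s < L₁ := Real.log_lt_log hs0 hs2
          have hA21 : (L₂ - Real.log s) ^ (α - 1) ≤ (L₁ - Real.log s) ^ (α - 1) :=
            Real.rpow_le_rpow_of_nonpos (by linarith) (by linarith) (by linarith)
          have hdiffnn : 0 ≤ (L₁ - Real.log s) ^ (α - 1) - (L₂ - Real.log s) ^ (α - 1) := by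
            linarith
          have hgb := hgbdd s ⟨hs1, by linarith [ht₂.2]⟩
          rw [Real.norm_eq_abs, abs_div, abs_mul, abs_of_pos hs0,
            show |(L₂ - Real.log s) ^ (α - 1) - (L₁ - Real.log s) ^ (α - 1)|
              = (L₁ - Real.log s) ^ (α - 1) - (L₂ - Real.log s) ^ (α - 1) by
                rw [abs_sub_comm]; exact abs_of_nonneg hdiffnn]
          gcongr
      _ = ∫ u in Set.Ioo 0 L₁, ((L₁ - u) ^ (α - 1) - (L₂ - u) ^ (α - 1)) * (M * u ^ k) := by
          have := integral_log_div
            (fun u => ((L₁ - u) ^ (α - 1) - (L₂ - u) ^ (α - 1)) * (M * u ^ k)) one_pos ht₁0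
          rw [Real.log_one] at this
          exact this
      _ = M * ((∫ u in Set.Ioo 0 L₁, (L₁ - u) ^ (α - 1) * u ^ k)
            - ∫ u in Set.Ioo 0 L₁, (L₂ - u) ^ (α - 1) * u ^ k) := by
          rw [← MeasureTheory.integral_sub (ker_integrableOn hα0 hk hL₁)
            (K2.mono_set (Set.Ioo_subset_Ioo le_rfl hL12)),
            ← MeasureTheory.integral_const_mul]
          apply MeasureTheory.setIntegral_congr_fun measurableSet_Ioo
          intro u _
          simp only []
          ring
      _ ≤ M * Bk * (L₁ ^ (α + k) - L₂ ^ (α + k)) + M * C * ((L₂ - L₁) ^ α / α) := by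
          rw [ker_integral hα0 hk hL₁]
          have hMI := mul_le_mul_of_nonneg_left hI0 hM
          nlinarith [hMI]
  -- combine
  rw [hdiff]
  calc |(∫ s in Set.Ioc 1 t₁,
        ((L₂ - Real.log s) ^ (α - 1) - (L₁ - Real.log s) ^ (α - 1)) * g s / s)
        + ∫ s in Set.Ioc t₁ t₂, (L₂ - Real.log s) ^ (α - 1) * g s / s|
      ≤ |∫ s in Set.Ioc 1 t₁,
          ((L₂ - Real.log s) ^ (α - 1) - (L₁ - Real.log s) ^ (α - 1)) * g s / s|
        + |∫ s in Set.Ioc t₁ t₂, (L₂ - Real.log s) ^ (α - 1) * g s / s| := abs_add_le _ _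
    _ ≤ M * Bk * (L₁ ^ (α + k) - L₂ ^ (α + k))
        + 2 * (M * C) * ((L₂ - L₁) ^ α / α) := by linarith [hT1, hT2]

lemma Phi_continuousOn {α k M l : ℝ} (hα0 : 0 < α) (hα1 : α < 1) (hk : -1 < k)
    (hM : 0 ≤ M) (hl0 : 0 < l) (g : ℝ → ℝ)
    (hgmeas : AEMeasurable g (MeasureTheory.volume.restrict (Set.Ioc 1 (1 + l))))
    (hgbdd : ∀ s ∈ Set.Ioc (1:ℝ) (1 + l), |g s| ≤ M * Real.log s ^ k) :
    ContinuousOn (fun t => ∫ s in Set.Ioc 1 t, (Real.log t - Real.log s) ^ (α - 1) * g s / s)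
      (Set.Ioc 1 (1 + l)) := by
  set Bk : ℝ := Real.Gamma (k + 1) * Real.Gamma α / Real.Gamma (α + k + 1) with hBk
  set Φ : ℝ → ℝ :=
    fun t => ∫ s in Set.Ioc 1 t, (Real.log t - Real.log s) ^ (α - 1) * g s / s with hΦ
  intro t₀ ht₀
  obtain ⟨ht₀1, ht₀2⟩ := ht₀
  set a : ℝ := (1 + t₀) / 2 with hadef
  have ha1 : 1 < a := by simp only [hadef]; linarith
  have hat₀ : a < t₀ := by simp only [hadef]; linarith
  set C : ℝ := max (Real.log a ^ k) (Real.log (1 + l) ^ k) with hC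
  have hLt₀ : 0 < Real.log t₀ := Real.log_pos ht₀1
  set ψ : ℝ → ℝ := fun t =>
    M * Bk * |Real.log t ^ (α + k) - Real.log t₀ ^ (α + k)|
      + 2 * (M * C) * (|Real.log t - Real.log t₀| ^ α / α) with hψ
  have hMBk : 0 ≤ M * Bk := by
    apply mul_nonneg hM
    rw [hBk]
    have g1 := Real.Gamma_pos_of_pos (by linarith : (0:ℝ) < k + 1)
    have g2 := Real.Gamma_pos_of_pos hα0
    have g3 := Real.Gamma_pos_of_pos (by linarith : (0:ℝ) < α + k + 1)
    positivity
  have key : ∀ t ∈ Set.Ioc (1:ℝ) (1 + l) ∩ Set.Ioi a, |Φ t - Φ t₀| ≤ ψ t := by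
    rintro t ⟨htJ, hta⟩
    rcases le_total t t₀ with hle | hle
    · have hbd := Phi_diff_bound hα0 hα1 hk hM hl0 g hgmeas hgbdd ha1
        (le_of_lt hta) hle ⟨ht₀1, ht₀2⟩
      rw [abs_sub_comm]
      refine le_trans hbd ?_
      have h1 : Real.log t ^ (α + k) - Real.log t₀ ^ (α + k)
          ≤ |Real.log t ^ (α + k) - Real.log t₀ ^ (α + k)| := le_abs_self _
      have h2 : Real.log t₀ - Real.log t = |Real.log t - Real.log t₀| := by
        rw [abs_sub_comm]
        exact (abs_of_nonneg (by
          have := Real.log_le_log (by linarith [htJ.1] : (0:ℝ) < t) hle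
          linarith)).symm
      rw [hψ]
      simp only []
      rw [← h2]
      have hr0 : 0 ≤ (Real.log t₀ - Real.log t) ^ α / α :=
        div_nonneg (Real.rpow_nonneg (by
          have := Real.log_le_log (by linarith [htJ.1] : (0:ℝ) < t) hle
          linarith) _) hα0.le
      nlinarith [mul_le_mul_of_nonneg_left h1 hMBk]
    · have hbd := Phi_diff_bound hα0 hα1 hk hM hl0 g hgmeas hgbdd ha1
        hat₀.le hle htJ
      refine le_trans hbd ?_
      have h1 : Real.log t₀ ^ (α + k) - Real.log t ^ (α + k)
          ≤ |Real.log t ^ (α + k) - Real.log t₀ ^ (α + k)| := by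
        rw [abs_sub_comm]
        exact le_abs_self _
      have h2 : Real.log t - Real.log t₀ = |Real.log t - Real.log t₀| :=
        (abs_of_nonneg (by
          have := Real.log_le_log (by linarith : (0:ℝ) < t₀) hle
          linarith)).symm
      rw [hψ]
      simp only []
      rw [← h2]
      have hr0 : 0 ≤ (Real.log t - Real.log t₀) ^ α / α :=
        div_nonneg (Real.rpow_nonneg (by
          have := Real.log_le_log (by linarith : (0:ℝ) < t₀) hle
          linarith) _) hα0.le
      nlinarith [mul_le_mul_of_nonneg_left h1 hMBk]
  -- ψ tends to 0
  have hψ0 : Filter.Tendsto ψ (𝓝[Set.Ioc (1:ℝ) (1 + l) ∩ Set.Ioi a] t₀) (𝓝 0) := by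
    have c1 : ContinuousAt (fun t : ℝ => Real.log t ^ (α + k)) t₀ := by
      apply ContinuousAt.rpow_const (Real.continuousAt_log (by linarith)) (Or.inl hLt₀.ne')
    have c2 : Filter.Tendsto (fun t : ℝ => |Real.log t ^ (α + k) - Real.log t₀ ^ (α + k)|)
        (𝓝 t₀) (𝓝 0) := by
      have h := (c1.tendsto.sub_const (Real.log t₀ ^ (α + k))).abs
      simpa using h
    have c3 : Filter.Tendsto (fun t : ℝ => |Real.log t - Real.log t₀| ^ α) (𝓝 t₀) (𝓝 0) := by
      have : Filter.Tendsto (fun t : ℝ => |Real.log t - Real.log t₀|) (𝓝 t₀) (𝓝 0) := by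
        have h := ((Real.continuousAt_log
          (by linarith : t₀ ≠ 0)).tendsto.sub_const (Real.log t₀)).abs
        simpa using h
      have hcont0 : ContinuousAt (fun x : ℝ => x ^ α) 0 :=
        Real.continuousAt_rpow_const 0 α (Or.inr hα0.le)
      have := hcont0.tendsto.comp this
      simpa [Function.comp_def, Real.zero_rpow hα0.ne'] using this
    have : Filter.Tendsto ψ (𝓝 t₀) (𝓝 0) := by
      have := ((c2.const_mul (M * Bk)).add ((c3.div_const α).const_mul (2 * (M * C))))
      simpa using this
    exact this.mono_left nhdsWithin_le_nhds
  have habs : Filter.Tendsto (fun t => |Φ t - Φ t₀|)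
      (𝓝[Set.Ioc (1:ℝ) (1 + l) ∩ Set.Ioi a] t₀) (𝓝 0) :=
    squeeze_zero' (Filter.Eventually.of_forall (fun t => abs_nonneg _))
      (eventually_mem_nhdsWithin.mono key) hψ0
  have hten : Filter.Tendsto Φ (𝓝[Set.Ioc (1:ℝ) (1 + l) ∩ Set.Ioi a] t₀) (𝓝 (Φ t₀)) := by
    rw [tendsto_iff_dist_tendsto_zero]
    simpa [Real.dist_eq] using habs
  have : ContinuousWithinAt Φ (Set.Ioc (1:ℝ) (1 + l)) t₀ := by
    rw [ContinuousWithinAt, nhdsWithin_restrict' _ (Ioi_mem_nhds hat₀)]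
    exact hten
  exact this

/-- Picard iterates for the Hilfer-Hadamard initial value problem. -/
noncomputable def picard (α γ x₀ : ℝ) (f : ℝ → ℝ → ℝ) : ℕ → ℝ → ℝ
  | 0 => fun t => x₀ * Real.log t ^ (γ - 1)
  | n + 1 => fun t => x₀ * Real.log t ^ (γ - 1) +
      (1 / Real.Gamma α) *
        ∫ s in (1:ℝ)..t, Real.log (t / s) ^ (α - 1) * f s (picard α γ x₀ f n s) / s

theorem picard_iterates_continuous_and_bounded (α β γ x₀ h b M k : ℝ) (f : ℝ → ℝ → ℝ)
    (hα0 : 0 < α) (hα1 : α < 1) (hβ0 : 0 ≤ β) (hβ1 : β ≤ 1)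
    (hγ : γ = α + β * (1 - α))
    (hh : 0 < h) (hb : 0 < b) (hM : 0 ≤ M) (hk : β * (1 - α) - 1 < k)
    (H1cont : ∀ t ∈ Set.Ioc (1:ℝ) (1 + h),
      ContinuousOn (fun x : ℝ => f t (Real.log t ^ (γ - 1) * x)) (Set.Icc (x₀ - b) (x₀ + b)))
    (H1meas : ∀ x ∈ Set.Icc (x₀ - b) (x₀ + b),
      AEMeasurable (fun t : ℝ => f t (Real.log t ^ (γ - 1) * x))
        (MeasureTheory.volume.restrict (Set.Ioc (1:ℝ) (1 + h))))
    (H1bdd : ∀ t ∈ Set.Ioc (1:ℝ) (1 + h), ∀ x ∈ Set.Icc (x₀ - b) (x₀ + b),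
      |f t (Real.log t ^ (γ - 1) * x)| ≤ M * Real.log t ^ k)
    (l : ℝ) (hl0 : 0 < l) (hlh : l ≤ h)
    (hlb : M * l ^ (α + k + 1 - γ) * (Real.Gamma (k + 1) / Real.Gamma (α + k + 1)) ≤ b)
    : ∀ n : ℕ, ContinuousOn (picard α γ x₀ f n) (Set.Ioc 1 (1 + l)) ∧
      ∀ t ∈ Set.Ioc (1:ℝ) (1 + l),
        |Real.log t ^ (1 - γ) * picard α γ x₀ f n t - x₀| ≤ b := by
  have hk' : (-1:ℝ) < k := by nlinarith [mul_nonneg hβ0 (by linarith : (0:ℝ) ≤ 1 - α)]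
  have hexp : 0 < α + k + 1 - γ := by rw [hγ]; linarith
  have hΓα := Real.Gamma_pos_of_pos hα0
  have hΓk := Real.Gamma_pos_of_pos (show (0:ℝ) < k + 1 by linarith)
  have hΓαk := Real.Gamma_pos_of_pos (show (0:ℝ) < α + k + 1 by linarith)
  have hbase : ∀ c : ℝ, ContinuousOn (fun t : ℝ => Real.log t ^ c) (Set.Ioc (1:ℝ) (1 + l)) := by
    intro c t ht
    have h1 : (0:ℝ) < Real.log t := Real.log_pos ht.1
    exact (ContinuousAt.rpow_const
      (Real.continuousAt_log (by linarith [ht.1] : t ≠ 0)) (Or.inl h1.ne')).continuousWithinAt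
  have hlogle : ∀ t ∈ Set.Ioc (1:ℝ) (1 + l), Real.log t ≤ l := by
    intro t ht
    calc Real.log t ≤ Real.log (1 + l) := Real.log_le_log (by linarith [ht.1]) ht.2
      _ ≤ (1 + l) - 1 := Real.log_le_sub_one_of_pos (by linarith)
      _ = l := by ring
  intro n
  induction n with
  | zero =>
    refine ⟨continuousOn_const.mul (hbase (γ - 1)), ?_⟩
    intro t ht
    have h1 : (0:ℝ) < Real.log t := Real.log_pos ht.1
    have hmul : Real.log t ^ (1 - γ) * Real.log t ^ (γ - 1) = 1 := by
      rw [← Real.rpow_add h1]; norm_num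
    have hz : Real.log t ^ (1 - γ) * picard α γ x₀ f 0 t - x₀ = 0 := by
      show Real.log t ^ (1 - γ) * (x₀ * Real.log t ^ (γ - 1)) - x₀ = 0
      calc Real.log t ^ (1 - γ) * (x₀ * Real.log t ^ (γ - 1)) - x₀
          = x₀ * (Real.log t ^ (1 - γ) * Real.log t ^ (γ - 1)) - x₀ := by ring
        _ = 0 := by rw [hmul]; ring
    rw [hz]
    simpa using hb.le
  | succ n ih =>
    obtain ⟨ihc, ihb⟩ := ih
    set x : ℝ → ℝ := fun s => Real.log s ^ (1 - γ) * picard α γ x₀ f n s with hx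
    have hxc : ContinuousOn x (Set.Ioc 1 (1 + l)) := (hbase (1 - γ)).mul ihc
    have hmap : ∀ s ∈ Set.Ioc (1:ℝ) (1 + l), x s ∈ Set.Icc (x₀ - b) (x₀ + b) := by
      intro s hs
      have habs := abs_le.mp (ihb s hs)
      have hX : x s = Real.log s ^ (1 - γ) * picard α γ x₀ f n s := rfl
      exact ⟨by rw [hX]; linarith [habs.1], by rw [hX]; linarith [habs.2]⟩
    have hrepr : ∀ s ∈ Set.Ioc (1:ℝ) (1 + l),
        picard α γ x₀ f n s = Real.log s ^ (γ - 1) * x s := by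
      intro s hs
      have h1 : (0:ℝ) < Real.log s := Real.log_pos hs.1
      have hmul : Real.log s ^ (γ - 1) * Real.log s ^ (1 - γ) = 1 := by
        rw [← Real.rpow_add h1]; norm_num
      calc picard α γ x₀ f n s
          = (Real.log s ^ (γ - 1) * Real.log s ^ (1 - γ)) * picard α γ x₀ f n s := by
            rw [hmul]; ring
        _ = Real.log s ^ (γ - 1) * x s := by rw [hx]; ring
    have hcar := caratheodory_aemeasurable f γ x₀ b h l hl0 hlh H1cont H1meas x hxc hmap
    have hgmeas : AEMeasurable (fun s => f s (picard α γ x₀ f n s))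
        (MeasureTheory.volume.restrict (Set.Ioc (1:ℝ) (1 + l))) := by
      apply hcar.congr
      rw [Filter.EventuallyEq, MeasureTheory.ae_restrict_iff' measurableSet_Ioc]
      apply Filter.Eventually.of_forall
      intro s hs
      rw [hrepr s hs]
    have hgbdd : ∀ s ∈ Set.Ioc (1:ℝ) (1 + l),
        |f s (picard α γ x₀ f n s)| ≤ M * Real.log s ^ k := by
      intro s hs
      rw [hrepr s hs]
      exact H1bdd s (Set.Ioc_subset_Ioc le_rfl (by linarith) hs) (x s) (hmap s hs)
    have heq : ∀ t ∈ Set.Ioc (1:ℝ) (1 + l), picard α γ x₀ f (n + 1) t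
        = x₀ * Real.log t ^ (γ - 1) + (1 / Real.Gamma α)
            * ∫ s in Set.Ioc 1 t, (Real.log t - Real.log s) ^ (α - 1)
                * f s (picard α γ x₀ f n s) / s := by
      intro t ht
      show x₀ * Real.log t ^ (γ - 1) + (1 / Real.Gamma α)
          * ∫ s in (1:ℝ)..t, Real.log (t / s) ^ (α - 1) * f s (picard α γ x₀ f n s) / s = _
      congr 1
      congr 1
      rw [intervalIntegral.integral_of_le (le_of_lt ht.1)]
      apply MeasureTheory.setIntegral_congr_fun measurableSet_Ioc
      intro s hs
      have hld : Real.log (t / s) = Real.log t - Real.log s :=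
        Real.log_div (by linarith [ht.1] : t ≠ 0) (by linarith [hs.1] : s ≠ 0)
      simp only [hld]
    constructor
    · apply ContinuousOn.congr
        ((continuousOn_const.mul (hbase (γ - 1))).add
          (continuousOn_const.mul (Phi_continuousOn hα0 hα1 hk' hM hl0 _ hgmeas hgbdd)))
      intro t ht
      exact heq t ht
    · intro t ht
      obtain ⟨ht1, ht2⟩ := ht
      have hL : 0 < Real.log t := Real.log_pos ht1
      have hmul : Real.log t ^ (1 - γ) * Real.log t ^ (γ - 1) = 1 := by
        rw [← Real.rpow_add hL]; norm_num
      have hb1 := integrand_integral_bound hα0 hk' hM hl0 _ hgmeas hgbdd ⟨ht1, ht2⟩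
      set I : ℝ := ∫ s in Set.Ioc 1 t, (Real.log t - Real.log s) ^ (α - 1)
          * f s (picard α γ x₀ f n s) / s with hI
      have hexpr : Real.log t ^ (1 - γ) * picard α γ x₀ f (n + 1) t - x₀
          = Real.log t ^ (1 - γ) * ((1 / Real.Gamma α) * I) := by
        rw [heq t ⟨ht1, ht2⟩]
        calc Real.log t ^ (1 - γ) * (x₀ * Real.log t ^ (γ - 1) + 1 / Real.Gamma α * I) - x₀
            = x₀ * (Real.log t ^ (1 - γ) * Real.log t ^ (γ - 1)) - x₀
              + Real.log t ^ (1 - γ) * (1 / Real.Gamma α * I) := by ring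
          _ = _ := by rw [hmul]; try ring
      rw [hexpr, abs_mul, abs_mul, abs_of_nonneg (Real.rpow_nonneg hL.le _),
        abs_of_pos (by positivity : (0:ℝ) < 1 / Real.Gamma α)]
      calc Real.log t ^ (1 - γ) * (1 / Real.Gamma α * |I|)
          ≤ Real.log t ^ (1 - γ) * (1 / Real.Gamma α
              * (M * Real.log t ^ (α + k)
                  * (Real.Gamma (k + 1) * Real.Gamma α / Real.Gamma (α + k + 1)))) := by
            gcongr
        _ = M * (Real.log t ^ (1 - γ) * Real.log t ^ (α + k))
              * (Real.Gamma (k + 1) / Real.Gamma (α + k + 1)) := by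
            field_simp
        _ = M * Real.log t ^ (α + k + 1 - γ)
              * (Real.Gamma (k + 1) / Real.Gamma (α + k + 1)) := by
            rw [← Real.rpow_add hL, show (1 - γ) + (α + k) = α + k + 1 - γ from by ring]
        _ ≤ M * l ^ (α + k + 1 - γ) * (Real.Gamma (k + 1) / Real.Gamma (α + k + 1)) := by
            gcongr
            exact hlogle t ⟨ht1, ht2⟩
        _ ≤ b := hlb
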